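/- Assume P_X({x : η(x) ≠ 1/2 and C̃^Bayes(x) ≠ C^Bayes(x)}) = 0. Then for every κ > 0 and any classifier C, R(C) − R(C^Bayes) ≤ κ{R̃(C) − R̃(C̃^Bayes)} + P_X(A_κ^c), where A_κ = {x : |2η(x) − 1| ≤ κ|2η̃(x) − 1|}. -/

import Mathlib

open MeasureTheory


lemma risk_repr {Ω 𝒳 : Type*} [MeasurableSpace Ω] [MeasurableSpace 𝒳]
    (μ : Measure Ω) [IsProbabilityMeasure μ]
    (X : Ω → 𝒳) (Y : Ω → Bool) (hX : Measurable X) (hY : Measurable Y)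
    (η : 𝒳 → ℝ) (hηm : Measurable η) (hηb : ∀ x, η x ∈ Set.Icc (0:ℝ) 1)
    (hη : ∀ A : Set 𝒳, MeasurableSet A →
      ∫ x in A, η x ∂(Measure.map X μ) = (μ (X ⁻¹' A ∩ {ω | Y ω = true})).toReal)
    (C : 𝒳 → Bool) (hC : Measurable C) :
    (μ {ω | C (X ω) ≠ Y ω}).toReal
      = ∫ x, (if C x = true then 1 - η x else η x) ∂(Measure.map X μ) := by
  have hPX : IsProbabilityMeasure (Measure.map X μ) := Measure.isProbabilityMeasure_map hX.aemeasurable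
  set P := Measure.map X μ with hP
  set S : Set 𝒳 := {x | C x = true} with hSdef
  have hS : MeasurableSet S := hC (measurableSet_singleton true)
  have hηint : Integrable η P := by
    refine (integrable_const (1:ℝ)).mono' hηm.aestronglyMeasurable ?_
    filter_upwards with x
    have := hηb x
    rw [Real.norm_eq_abs, abs_le]; constructor <;> linarith [this.1, this.2]
  -- set decomposition
  have hset : {ω | C (X ω) ≠ Y ω}
      = (X ⁻¹' S ∩ {ω | Y ω = false}) ∪ (X ⁻¹' Sᶜ ∩ {ω | Y ω = true}) := by
    ext ω
    simp only [Set.mem_setOf_eq, Set.mem_union, Set.mem_inter_iff, Set.mem_preimage,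
      Set.mem_compl_iff, hSdef]
    cases hc : C (X ω) <;> cases hy : Y ω <;> simp
  have hYt : MeasurableSet {ω | Y ω = true} := hY (measurableSet_singleton true)
  have hYf : MeasurableSet {ω | Y ω = false} := hY (measurableSet_singleton false)
  have hmeas1 : MeasurableSet (X ⁻¹' S ∩ {ω | Y ω = false}) := (hX hS).inter hYf
  have hmeas2 : MeasurableSet (X ⁻¹' Sᶜ ∩ {ω | Y ω = true}) := (hX hS.compl).inter hYt
  have hdisj : Disjoint (X ⁻¹' S ∩ {ω | Y ω = false}) (X ⁻¹' Sᶜ ∩ {ω | Y ω = true}) := by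
    refine Set.disjoint_left.2 ?_
    rintro ω ⟨h1, _⟩ ⟨h2, _⟩
    exact h2 h1
  have hmu : (μ {ω | C (X ω) ≠ Y ω}).toReal
      = (μ (X ⁻¹' S ∩ {ω | Y ω = false})).toReal + (μ (X ⁻¹' Sᶜ ∩ {ω | Y ω = true})).toReal := by
    rw [hset, measure_union hdisj hmeas2, ENNReal.toReal_add (measure_ne_top μ _) (measure_ne_top μ _)]
  -- b.toReal = P S - ∫_S η
  have hsplitS : (μ (X ⁻¹' S)).toReal
      = (μ (X ⁻¹' S ∩ {ω | Y ω = true})).toReal + (μ (X ⁻¹' S ∩ {ω | Y ω = false})).toReal := by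
    have hd : Disjoint (X ⁻¹' S ∩ {ω | Y ω = true}) (X ⁻¹' S ∩ {ω | Y ω = false}) := by
      refine Set.disjoint_left.2 ?_
      rintro ω ⟨_, h1⟩ ⟨_, h2⟩
      simp only [Set.mem_setOf_eq] at h1 h2
      rw [h1] at h2; exact Bool.noConfusion h2
    have hu : (X ⁻¹' S ∩ {ω | Y ω = true}) ∪ (X ⁻¹' S ∩ {ω | Y ω = false}) = X ⁻¹' S := by
      ext ω; simp only [Set.mem_inter_iff, Set.mem_union, Set.mem_setOf_eq]
      cases hy : Y ω <;> simp
    have := measure_union (μ := μ) hd ((hX hS).inter hYf)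
    rw [hu] at this
    rw [this, ENNReal.toReal_add (measure_ne_top μ _) (measure_ne_top μ _)]
  have hPS : (P S).toReal = (μ (X ⁻¹' S)).toReal := by rw [hP, Measure.map_apply hX hS]
  have hb : (μ (X ⁻¹' S ∩ {ω | Y ω = false})).toReal = (P S).toReal - ∫ x in S, η x ∂P := by
    rw [hη S hS, hPS]; linarith [hsplitS]
  have hc' : (μ (X ⁻¹' Sᶜ ∩ {ω | Y ω = true})).toReal = ∫ x in Sᶜ, η x ∂P := (hη Sᶜ hS.compl).symm
  -- RHS
  have hrhs : ∫ x, (if C x = true then 1 - η x else η x) ∂P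
      = ((P S).toReal - ∫ x in S, η x ∂P) + ∫ x in Sᶜ, η x ∂P := by
    have hfint : Integrable (fun x => if C x = true then 1 - η x else η x) P := by
      refine (integrable_const (2:ℝ)).mono' ?_ ?_
      · refine Measurable.aestronglyMeasurable ?_
        exact Measurable.ite hS ((measurable_const).sub hηm) hηm
      · filter_upwards with x
        have := hηb x
        by_cases h : C x = true <;> simp [h, abs_le] <;> constructor <;> linarith [this.1, this.2]
    rw [← integral_add_compl hS hfint]
    have h1 : ∫ x in S, (if C x = true then 1 - η x else η x) ∂P = ∫ x in S, (1 - η x) ∂P := by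
      refine setIntegral_congr_fun hS ?_
      intro x hx; simp only [hSdef, Set.mem_setOf_eq] at hx; simp [hx]
    have h2 : ∫ x in Sᶜ, (if C x = true then 1 - η x else η x) ∂P = ∫ x in Sᶜ, η x ∂P := by
      refine setIntegral_congr_fun hS.compl ?_
      intro x hx; simp only [hSdef, Set.mem_compl_iff, Set.mem_setOf_eq] at hx
      simp [hx]
    have h3 : ∫ x in S, (1 - η x) ∂P = (P S).toReal - ∫ x in S, η x ∂P := by
      rw [integral_sub (integrable_const 1).integrableOn hηint.integrableOn]
      simp [setIntegral_const]; rfl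
    rw [h1, h2, h3]
  rw [hmu, hb, hc', hrhs]

lemma excess_repr {Ω 𝒳 : Type*} [MeasurableSpace Ω] [MeasurableSpace 𝒳]
    (μ : Measure Ω) [IsProbabilityMeasure μ]
    (X : Ω → 𝒳) (Y : Ω → Bool) (hX : Measurable X) (hY : Measurable Y)
    (η : 𝒳 → ℝ) (hηm : Measurable η) (hηb : ∀ x, η x ∈ Set.Icc (0:ℝ) 1)
    (hη : ∀ A : Set 𝒳, MeasurableSet A →
      ∫ x in A, η x ∂(Measure.map X μ) = (μ (X ⁻¹' A ∩ {ω | Y ω = true})).toReal)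
    (CB : 𝒳 → Bool) (hCB : ∀ x, CB x = if (1/2 : ℝ) ≤ η x then true else false)
    (C : 𝒳 → Bool) (hC : Measurable C) :
    (μ {ω | C (X ω) ≠ Y ω}).toReal - (μ {ω | CB (X ω) ≠ Y ω}).toReal
      = ∫ x, Set.indicator {x | C x ≠ CB x} (fun x => |2 * η x - 1|) x ∂(Measure.map X μ) := by
  have hPX : IsProbabilityMeasure (Measure.map X μ) := Measure.isProbabilityMeasure_map hX.aemeasurable
  set P := Measure.map X μ with hP
  have hCBm : Measurable CB := by
    have : CB = fun x => if (1/2 : ℝ) ≤ η x then true else false := funext hCB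
    rw [this]
    exact Measurable.ite (measurableSet_le measurable_const hηm) measurable_const measurable_const
  have hηint : Integrable η P := by
    refine (integrable_const (1:ℝ)).mono' hηm.aestronglyMeasurable ?_
    filter_upwards with x
    have := hηb x
    rw [Real.norm_eq_abs, abs_le]; constructor <;> linarith [this.1, this.2]
  have hint : ∀ D : 𝒳 → Bool, Measurable D →
      Integrable (fun x => if D x = true then 1 - η x else η x) P := by
    intro D hD
    refine (integrable_const (2:ℝ)).mono' ?_ ?_
    · exact (Measurable.ite (hD (measurableSet_singleton true))
        ((measurable_const).sub hηm) hηm).aestronglyMeasurable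
    · filter_upwards with x
      have := hηb x
      by_cases h : D x = true <;> simp [h, Real.norm_eq_abs, abs_le] <;>
        constructor <;> linarith [this.1, this.2]
  rw [risk_repr μ X Y hX hY η hηm hηb hη C hC, risk_repr μ X Y hX hY η hηm hηb hη CB hCBm,
    ← integral_sub (hint C hC) (hint CB hCBm)]
  refine integral_congr_ae (Filter.Eventually.of_forall ?_)
  intro x
  have hcb := hCB x
  by_cases hmem : C x = CB x
  · rw [Set.indicator_of_notMem (by simp [Set.mem_setOf_eq, hmem])]
    simp [hmem]
  · rw [Set.indicator_of_mem (by simp [Set.mem_setOf_eq, hmem])]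
    by_cases hle : (1/2 : ℝ) ≤ η x
    · -- CB x = true, so C x = false
      rw [if_pos hle] at hcb
      have hcx : C x = false := by
        cases h : C x
        · rfl
        · exact absurd (h.trans hcb.symm) hmem
      simp only [hcx, hcb, Bool.false_eq_true, if_false, if_true]
      rw [abs_of_nonneg (by linarith)]
      ring
    · rw [if_neg hle] at hcb
      have hcx : C x = true := by
        cases h : C x
        · exact absurd (h.trans hcb.symm) hmem
        · rfl
      simp only [hcx, hcb, if_true, Bool.false_eq_true, if_false]
      rw [abs_of_nonpos (by push_neg at hle; linarith)]
      ring

/-- If `P_X({x : η(x) ≠ 1/2 and C̃^Bayes(x) ≠ C^Bayes(x)}) = 0`, then for every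
`κ > 0` and any classifier `C`,
`R(C) − R(C^Bayes) ≤ κ (R̃(C) − R̃(C̃^Bayes)) + P_X(A_κᶜ)`,
where `A_κ = {x : |2η(x) − 1| ≤ κ |2η̃(x) − 1|}`. -/
theorem stmt7 {Ω 𝒳 : Type*} [MeasurableSpace Ω] [MeasurableSpace 𝒳]
    (μ : Measure Ω) [IsProbabilityMeasure μ]
    (X : Ω → 𝒳) (Y Yt : Ω → Bool)
    (hX : Measurable X) (hY : Measurable Y) (hYt : Measurable Yt)
    (η ηt : 𝒳 → ℝ) (hηm : Measurable η) (hηtm : Measurable ηt)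
    (hηb : ∀ x, η x ∈ Set.Icc (0:ℝ) 1) (hηtb : ∀ x, ηt x ∈ Set.Icc (0:ℝ) 1)
    (hη : ∀ A : Set 𝒳, MeasurableSet A →
      ∫ x in A, η x ∂(Measure.map X μ) = (μ (X ⁻¹' A ∩ {ω | Y ω = true})).toReal)
    (hηt : ∀ A : Set 𝒳, MeasurableSet A →
      ∫ x in A, ηt x ∂(Measure.map X μ) = (μ (X ⁻¹' A ∩ {ω | Yt ω = true})).toReal)
    (CBayes CtBayes : 𝒳 → Bool)
    (hCBayes : ∀ x, CBayes x = if (1/2 : ℝ) ≤ η x then true else false)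
    (hCtBayes : ∀ x, CtBayes x = if (1/2 : ℝ) ≤ ηt x then true else false)
    -- the Bayes classifiers agree off the set {η = 1/2}, P_X-a.e.
    (hagree : Measure.map X μ {x | η x ≠ 1/2 ∧ CtBayes x ≠ CBayes x} = 0) :
    ∀ κ : ℝ, 0 < κ → ∀ C : 𝒳 → Bool, Measurable C →
      (μ {ω | C (X ω) ≠ Y ω}).toReal - (μ {ω | CBayes (X ω) ≠ Y ω}).toReal
        ≤ κ * ((μ {ω | C (X ω) ≠ Yt ω}).toReal - (μ {ω | CtBayes (X ω) ≠ Yt ω}).toReal)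
          + (Measure.map X μ {x | |2 * η x - 1| ≤ κ * |2 * ηt x - 1|}ᶜ).toReal := by
  intro κ hκ C hC
  have hPX : IsProbabilityMeasure (Measure.map X μ) := Measure.isProbabilityMeasure_map hX.aemeasurable
  set P := Measure.map X μ with hP
  have hCBm : Measurable CBayes := by
    have : CBayes = fun x => if (1/2 : ℝ) ≤ η x then true else false := funext hCBayes
    rw [this]
    exact Measurable.ite (measurableSet_le measurable_const hηm) measurable_const measurable_const
  have hCtBm : Measurable CtBayes := by
    have : CtBayes = fun x => if (1/2 : ℝ) ≤ ηt x then true else false := funext hCtBayes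
    rw [this]
    exact Measurable.ite (measurableSet_le measurable_const hηtm) measurable_const measurable_const
  set D : Set 𝒳 := {x | C x ≠ CBayes x} with hDdef
  set Dt : Set 𝒳 := {x | C x ≠ CtBayes x} with hDtdef
  set A : Set 𝒳 := {x | |2 * η x - 1| ≤ κ * |2 * ηt x - 1|} with hAdef
  have hD : MeasurableSet D := by
    have : D = {x | C x = CBayes x}ᶜ := by ext x; simp [hDdef]
    rw [this]
    exact (measurableSet_eq_fun hC hCBm).compl
  have hDt : MeasurableSet Dt := by
    have : Dt = {x | C x = CtBayes x}ᶜ := by ext x; simp [hDtdef]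
    rw [this]
    exact (measurableSet_eq_fun hC hCtBm).compl
  have hA : MeasurableSet A :=
    measurableSet_le ((hηm.const_mul 2).sub measurable_const).abs
      (((hηtm.const_mul 2).sub measurable_const).abs.const_mul κ)
  -- rewrite both excess risks as integrals
  rw [excess_repr μ X Y hX hY η hηm hηb hη CBayes hCBayes C hC,
    excess_repr μ X Yt hX hYt ηt hηtm hηtb hηt CtBayes hCtBayes C hC]
  -- move constants inside the integral
  rw [← integral_const_mul]
  have hPAc : (P Aᶜ).toReal = ∫ x, Aᶜ.indicator (fun _ => (1:ℝ)) x ∂P := by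
    rw [integral_indicator_const (1:ℝ) hA.compl]; simp; rfl
  rw [hPAc, ← integral_add]
  · -- main a.e. comparison
    refine integral_mono_ae ?_ ?_ ?_
    · -- integrable LHS
      refine (integrable_const (1:ℝ)).mono' ?_ ?_
      · exact (((hηm.const_mul 2).sub measurable_const).abs.indicator hD).aestronglyMeasurable
      · filter_upwards with x
        rw [Real.norm_eq_abs, abs_le]
        have h1 : |2 * η x - 1| ≤ 1 := by
          have := hηb x
          rw [abs_le]; constructor <;> [linarith [this.1]; linarith [this.2]]
        have h0 : (0:ℝ) ≤ D.indicator (fun x => |2 * η x - 1|) x :=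
          Set.indicator_nonneg (fun y _ => abs_nonneg _) x
        have h2 : D.indicator (fun x => |2 * η x - 1|) x ≤ 1 := by
          by_cases hx : x ∈ D
          · rw [Set.indicator_of_mem hx]; exact h1
          · rw [Set.indicator_of_notMem hx]; linarith
        constructor <;> linarith
    · -- integrable RHS
      refine (integrable_const (κ + 1 : ℝ)).mono' ?_ ?_
      · refine AEStronglyMeasurable.add ?_ ?_
        · exact ((((hηtm.const_mul 2).sub measurable_const).abs.indicator hDt).const_mul
            κ).aestronglyMeasurable
        · exact (measurable_const.indicator hA.compl).aestronglyMeasurable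
      · filter_upwards with x
        rw [Real.norm_eq_abs]
        have h1 : |2 * ηt x - 1| ≤ 1 := by
          have := hηtb x
          rw [abs_le]; constructor <;> [linarith [this.1]; linarith [this.2]]
        have h0 : (0:ℝ) ≤ Dt.indicator (fun x => |2 * ηt x - 1|) x :=
          Set.indicator_nonneg (fun y _ => abs_nonneg _) x
        have h2 : Dt.indicator (fun x => |2 * ηt x - 1|) x ≤ 1 := by
          by_cases hx : x ∈ Dt
          · rw [Set.indicator_of_mem hx]; exact h1
          · rw [Set.indicator_of_notMem hx]; linarith
        have h3 : (0:ℝ) ≤ Aᶜ.indicator (fun _ => (1:ℝ)) x := by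
          by_cases hx : x ∈ Aᶜ <;> simp [hx]
        have h4 : Aᶜ.indicator (fun _ => (1:ℝ)) x ≤ 1 := by
          by_cases hx : x ∈ Aᶜ <;> simp [hx]
        rw [abs_le]
        constructor <;> nlinarith
    · -- the a.e. pointwise inequality
      have hae : ∀ᵐ x ∂P, x ∉ {x | η x ≠ 1/2 ∧ CtBayes x ≠ CBayes x} :=
        measure_eq_zero_iff_ae_notMem.1 hagree
      filter_upwards [hae] with x hx
      have h0t : (0:ℝ) ≤ κ * Dt.indicator (fun x => |2 * ηt x - 1|) x :=
        mul_nonneg hκ.le (Set.indicator_nonneg (fun y _ => abs_nonneg _) x)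
      by_cases hxA : x ∈ A
      · have hcA : Aᶜ.indicator (fun _ => (1:ℝ)) x = 0 :=
          Set.indicator_of_notMem (by simpa using hxA) _
        by_cases hxD : x ∈ D
        · rw [Set.indicator_of_mem hxD, hcA, add_zero]
          by_cases heta : η x = 1/2
          · have : |2 * η x - 1| = 0 := by rw [heta]; norm_num
            rw [this]; exact h0t
          · have hagreex : CtBayes x = CBayes x := by
              by_contra hne
              exact hx ⟨heta, hne⟩
            have hxDt : x ∈ Dt := by
              simp only [hDtdef, Set.mem_setOf_eq, hagreex]
              simpa [hDdef, Set.mem_setOf_eq] using hxD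
            rw [Set.indicator_of_mem hxDt]
            simpa [hAdef, Set.mem_setOf_eq] using hxA
        · rw [Set.indicator_of_notMem hxD, hcA, add_zero]
          exact h0t
      · have hcA : Aᶜ.indicator (fun _ => (1:ℝ)) x = 1 :=
          Set.indicator_of_mem (by simpa using hxA) _
        rw [hcA]
        have h2 : D.indicator (fun x => |2 * η x - 1|) x ≤ 1 := by
          by_cases hxd : x ∈ D
          · rw [Set.indicator_of_mem hxd]
            have := hηb x
            rw [abs_le]; constructor <;> [linarith [this.1]; linarith [this.2]]
          · rw [Set.indicator_of_notMem hxd]; norm_num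
        linarith
  · -- integrability side goals of integral_add
    refine (integrable_const (κ : ℝ)).mono' ?_ ?_
    · exact ((((hηtm.const_mul 2).sub measurable_const).abs.indicator hDt).const_mul
        κ).aestronglyMeasurable
    · filter_upwards with x
      rw [Real.norm_eq_abs]
      have h1 : |2 * ηt x - 1| ≤ 1 := by
        have := hηtb x
        rw [abs_le]; constructor <;> [linarith [this.1]; linarith [this.2]]
      have h0 : (0:ℝ) ≤ Dt.indicator (fun x => |2 * ηt x - 1|) x :=
        Set.indicator_nonneg (fun y _ => abs_nonneg _) x
      have h2 : Dt.indicator (fun x => |2 * ηt x - 1|) x ≤ 1 := by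
        by_cases hx : x ∈ Dt
        · rw [Set.indicator_of_mem hx]; exact h1
        · rw [Set.indicator_of_notMem hx]; linarith
      rw [abs_le]
      constructor <;> nlinarith
  · refine (integrable_const (1 : ℝ)).mono' ?_ ?_
    · exact (measurable_const.indicator hA.compl).aestronglyMeasurable
    · filter_upwards with x
      by_cases hx : x ∈ Aᶜ <;> simp [hx]
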